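/- For finite multisets x and y of natural numbers of the same cardinality, the following are equivalent: (i) either the multiplicity functions of x and y are equal, or there exists a natural number a such that the multiplicity of a in x is strictly less than the multiplicity of a in y and, for every natural number b > a, the multiplicities of b in x and in y are equal; (ii) the list of elements of x sorted in non-increasing order is ≤_lex the list of elements of y sorted in non-increasing order. -/

import Mathlib

namespace MsetPaper

/-- The maximum element of a multiset of naturals (`0` for the empty multiset). -/
def mmax (s : Multiset ℕ) : ℕ := s.sup

/-- The strict multiset order `x <ₘ y` of the paper: either `x` is empty and `y` is not,
or both are nonempty and either `max x < max y`, or the maxima agree and the multisets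
with one occurrence of the maximum removed are again strictly ordered. -/
inductive MLt : Multiset ℕ → Multiset ℕ → Prop
  | empty {y : Multiset ℕ} : y ≠ 0 → MLt 0 y
  | maxLt {x y : Multiset ℕ} : x ≠ 0 → y ≠ 0 → mmax x < mmax y → MLt x y
  | maxEq {x y : Multiset ℕ} : x ≠ 0 → y ≠ 0 → mmax x = mmax y →
      MLt (x.erase (mmax x)) (y.erase (mmax y)) → MLt x y

/-- The (non-strict) multiset order `x ≤ₘ y`. -/
def MLe (x y : Multiset ℕ) : Prop := MLt x y ∨ x = y

/-- The multiset of values taken by a vector. -/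
def msetOf {n : ℕ} (x : Fin n → ℕ) : Multiset ℕ := (List.ofFn x : List ℕ)

/-- The list of elements of a multiset sorted in non-increasing order. -/
def sortDesc (s : Multiset ℕ) : List ℕ := (s.sort (· ≤ ·)).reverse

/-- Lexicographic order on lists: equal, or at the first position where they differ the
first list has the strictly smaller entry. -/
def LexLe (l₁ l₂ : List ℕ) : Prop := l₁ = l₂ ∨ List.Lex (· < ·) l₁ l₂

lemma sup_mem {s : Multiset ℕ} (hs : s ≠ 0) : s.sup ∈ s := by
  induction s using Multiset.induction with
  | empty => simp at hs
  | cons a t ih =>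
    rw [Multiset.sup_cons]
    rcases eq_or_ne t 0 with rfl | ht
    · simp
    · rcases le_total a t.sup with h | h
      · rw [sup_eq_right.mpr h]; exact Multiset.mem_cons_of_mem (ih ht)
      · rw [sup_eq_left.mpr h]; exact Multiset.mem_cons_self a t

lemma sortDesc_sorted (s : Multiset ℕ) : (sortDesc s).Pairwise (· ≥ ·) := by
  rw [sortDesc, List.pairwise_reverse]
  exact Multiset.pairwise_sort s (· ≤ ·)

lemma sortDesc_coe (s : Multiset ℕ) : ((sortDesc s : List ℕ) : Multiset ℕ) = s := by
  rw [sortDesc, Multiset.coe_reverse, Multiset.sort_eq]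

lemma mem_sortDesc {a : ℕ} {s : Multiset ℕ} : a ∈ sortDesc s ↔ a ∈ s := by
  rw [← Multiset.mem_coe, sortDesc_coe]

lemma sortDesc_cons (s : Multiset ℕ) (hs : s ≠ 0) :
    sortDesc s = s.sup :: sortDesc (s.erase s.sup) := by
  refine (fun hp h1 h2 => List.Perm.eq_of_pairwise' (r := (· ≥ ·)) h1 h2 hp) ?_ ?_ ?_
  · rw [← Multiset.coe_eq_coe, sortDesc_coe]
    show s = ↑(s.sup :: sortDesc (s.erase s.sup))
    rw [← Multiset.cons_coe, sortDesc_coe, Multiset.cons_erase (sup_mem hs)]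
  · exact sortDesc_sorted s
  · rw [List.pairwise_cons]
    refine ⟨fun b hb => ?_, sortDesc_sorted _⟩
    exact Multiset.le_sup (Multiset.mem_of_mem_erase (mem_sortDesc.mp hb))

lemma sortDesc_zero : sortDesc 0 = [] := by simp [sortDesc]

lemma not_lexLe_of_gt {a b : ℕ} (h : b < a) (l m : List ℕ) : ¬ LexLe (a :: l) (b :: m) := by
  rintro (heq | hlex)
  · simp only [List.cons.injEq] at heq; omega
  · cases hlex with
    | rel h' => omega
    | cons h' => omega

lemma lexLe_cons (a : ℕ) (l m : List ℕ) : LexLe (a :: l) (a :: m) ↔ LexLe l m := by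
  constructor
  · rintro (h | h)
    · exact Or.inl (by injection h)
    · cases h with
      | rel h => exact absurd h (lt_irrefl a)
      | cons h => exact Or.inr h
  · rintro (h | h)
    · exact Or.inl (by rw [h])
    · exact Or.inr (List.Lex.cons h)

lemma count_eq_zero_of_sup_lt {s : Multiset ℕ} {a : ℕ} (h : s.sup < a) : s.count a = 0 := by
  rw [Multiset.count_eq_zero]
  intro hmem
  exact absurd (Multiset.le_sup hmem) (not_le.mpr h)

/-- LHS transfer under erasing common maximum. -/
lemma lhs_erase {x y : Multiset ℕ} (hx : x ≠ 0) (hy : y ≠ 0) (hM : x.sup = y.sup) :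
    ((∀ a : ℕ, x.count a = y.count a) ∨
        ∃ a : ℕ, x.count a < y.count a ∧ ∀ b : ℕ, a < b → x.count b = y.count b) ↔
      ((∀ a : ℕ, (x.erase x.sup).count a = (y.erase y.sup).count a) ∨
        ∃ a : ℕ, (x.erase x.sup).count a < (y.erase y.sup).count a ∧
          ∀ b : ℕ, a < b → (x.erase x.sup).count b = (y.erase y.sup).count b) := by
  set M := x.sup with hMdef
  have hyM : y.sup = M := hM.symm
  have hcx : 1 ≤ x.count M := Multiset.count_pos.mpr (sup_mem hx)
  have hcy : 1 ≤ y.count M := by rw [← hyM] at *; exact Multiset.count_pos.mpr (sup_mem hy)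
  have hex : ∀ a, (x.erase M).count a = if a = M then x.count a - 1 else x.count a := by
    intro a
    split
    · next h => subst h; exact Multiset.count_erase_self _ _
    · next h => exact Multiset.count_erase_of_ne h _
  have hey : ∀ a, (y.erase y.sup).count a = if a = M then y.count a - 1 else y.count a := by
    intro a
    rw [hyM]
    split
    · next h => subst h; exact Multiset.count_erase_self _ _
    · next h => exact Multiset.count_erase_of_ne h _
  constructor
  · rintro (hc | ⟨a, ha, hab⟩)
    · left
      intro a
      rw [hex, hey, hc a]
    · -- a ≤ M
      have haM : a ≤ M := by
        by_contra hgt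
        push_neg at hgt
        have h0 : x.count a = 0 := count_eq_zero_of_sup_lt hgt
        have : 0 < y.count a := by omega
        have : a ≤ y.sup := Multiset.le_sup (Multiset.count_pos.mp this)
        omega
      rcases eq_or_lt_of_le haM with rfl | hlt
      · right
        refine ⟨M, ?_, fun b hb => ?_⟩
        · rw [hex, hey, if_pos rfl, if_pos rfl]; omega
        · rw [hex, hey, if_neg (by omega), if_neg (by omega)]
          exact hab b hb
      · right
        refine ⟨a, ?_, fun b hb => ?_⟩
        · rw [hex, hey, if_neg (by omega), if_neg (by omega)]; exact ha
        · rw [hex, hey]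
          by_cases hbM : b = M
          · rw [if_pos hbM, if_pos hbM, hab b hb]
          · rw [if_neg hbM, if_neg hbM]; exact hab b hb
  · rintro (hc | ⟨a, ha, hab⟩)
    · left
      intro a
      have := hc a
      rw [hex, hey] at this
      by_cases haM : a = M
      · rw [if_pos haM, if_pos haM] at this; subst haM; omega
      · rwa [if_neg haM, if_neg haM] at this
    · rw [hex, hey] at ha
      have haM : a ≤ M := by
        by_contra hgt
        push_neg at hgt
        rw [if_neg (by omega), if_neg (by omega)] at ha
        have h0 : x.count a = 0 := count_eq_zero_of_sup_lt hgt
        have : 0 < y.count a := by omega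
        have : a ≤ y.sup := Multiset.le_sup (Multiset.count_pos.mp this)
        omega
      rcases eq_or_lt_of_le haM with rfl | hlt
      · right
        rw [if_pos rfl, if_pos rfl] at ha
        refine ⟨M, by omega, fun b hb => ?_⟩
        have := hab b hb
        rw [hex, hey, if_neg (by omega), if_neg (by omega)] at this
        exact this
      · right
        rw [if_neg (by omega), if_neg (by omega)] at ha
        refine ⟨a, ha, fun b hb => ?_⟩
        have := hab b hb
        rw [hex, hey] at this
        by_cases hbM : b = M
        · rw [if_pos hbM, if_pos hbM] at this; subst hbM; omega
        · rwa [if_neg hbM, if_neg hbM] at this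

lemma stmt5_aux : ∀ n : ℕ, ∀ x y : Multiset ℕ, Multiset.card x = n → Multiset.card y = n →
    (((∀ a : ℕ, x.count a = y.count a) ∨
        ∃ a : ℕ, x.count a < y.count a ∧ ∀ b : ℕ, a < b → x.count b = y.count b) ↔
      LexLe (sortDesc x) (sortDesc y)) := by
  intro n
  induction n with
  | zero =>
    intro x y hx hy
    rw [Multiset.card_eq_zero] at hx hy
    subst hx; subst hy
    simp [LexLe]
  | succ n ih =>
    intro x y hxc hyc
    have hx : x ≠ 0 := by rintro rfl; simp at hxc
    have hy : y ≠ 0 := by rintro rfl; simp at hyc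
    have hmx : x.sup ∈ x := sup_mem hx
    have hmy : y.sup ∈ y := sup_mem hy
    rcases lt_trichotomy x.sup y.sup with hlt | heq | hgt
    · apply iff_of_true
      · right
        refine ⟨y.sup, ?_, fun b hb => ?_⟩
        · have h0 : x.count y.sup = 0 := count_eq_zero_of_sup_lt hlt
          have : 0 < y.count y.sup := Multiset.count_pos.mpr hmy
          omega
        · rw [count_eq_zero_of_sup_lt (lt_trans hlt hb),
            count_eq_zero_of_sup_lt hb]
      · rw [sortDesc_cons x hx, sortDesc_cons y hy]
        exact Or.inr (List.Lex.rel hlt)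
    · have hce : Multiset.card (x.erase x.sup) = n := by
        rw [Multiset.card_erase_of_mem hmx, hxc]; rfl
      have hce' : Multiset.card (y.erase y.sup) = n := by
        rw [Multiset.card_erase_of_mem hmy, hyc]; rfl
      rw [lhs_erase hx hy heq, ih _ _ hce hce', sortDesc_cons x hx, sortDesc_cons y hy, heq,
        lexLe_cons]
    · apply iff_of_false
      · rintro (hc | ⟨a, ha, hab⟩)
        · have : x = y := Multiset.ext.mpr hc
          rw [this] at hgt
          exact lt_irrefl _ hgt
        · by_cases haM : x.sup ≤ a
          · have : 0 < y.count a := by omega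
            have : a ≤ y.sup := Multiset.le_sup (Multiset.count_pos.mp this)
            omega
          · push_neg at haM
            have h1 : 1 ≤ x.count x.sup := Multiset.count_pos.mpr hmx
            have h2 : x.count x.sup = y.count x.sup := hab _ haM
            have : 0 < y.count x.sup := by omega
            have : x.sup ≤ y.sup := Multiset.le_sup (Multiset.count_pos.mp this)
            omega
      · rw [sortDesc_cons x hx, sortDesc_cons y hy]
        exact not_lexLe_of_gt hgt _ _

/-- For multisets of equal cardinality: the occurrence vectors are lexicographically
ordered iff the non-increasingly sorted lists are lexicographically ordered. -/
theorem stmt5 (x y : Multiset ℕ) (h : Multiset.card x = Multiset.card y) :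
    ((∀ a : ℕ, x.count a = y.count a) ∨
        ∃ a : ℕ, x.count a < y.count a ∧ ∀ b : ℕ, a < b → x.count b = y.count b) ↔
      LexLe (sortDesc x) (sortDesc y) := by
  exact stmt5_aux (Multiset.card y) x y h rfl

end MsetPaper
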